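/- (Majority renormalization, supercritical case) Let X = (X_k)_{k∈ℤ} be i.i.d. {0,1}-valued Bernoulli(p) random variables. Define sequences X⁰ := X and, for n ≥ 1, Xⁿ_k := maj(X^{n−1}_{3k−1}, X^{n−1}_{3k}, X^{n−1}_{3k+1}) for k ∈ ℤ, where maj is the majority function of three bits. Let E₁ be the event that the trace (X⁰_0, X¹_0, X²_0, …) eventually stabilizes at 1, i.e., E₁ = {∃m ∀n ≥ m : Xⁿ_0 = 1}. If p > 1/2, then P(E₁) = 1; if p < 1/2, then P(E₁) = 0 and the trace almost surely eventually stabilizes at 0; if p = 1/2, then almost surely the trace stabilizes at neither 0 nor 1. -/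

import Mathlib

open MeasureTheory ProbabilityTheory ENNReal

/-- The majority value among three bits. -/
def majB (a b c : Bool) : Bool := (a && b) || (a && c) || (b && c)


lemma majB_mid_true (a c : Bool) : majB a true c = (a || c) := by cases a <;> cases c <;> rfl
lemma majB_mid_false (a c : Bool) : majB a false c = (a && c) := by cases a <;> cases c <;> rfl

noncomputable def majWeight (w : Bool → ℝ≥0∞) (v : Bool) : ℝ≥0∞ :=
  ∑ c : Bool × Bool × Bool, if majB c.1 c.2.1 c.2.2 = v then w c.1 * w c.2.1 * w c.2.2 else 0

lemma majWeight_ofReal (r r' : ℝ) (h0 : 0 ≤ r) (h1 : r ≤ 1) (hrec : r' = 3*r^2 - 2*r^3) (v : Bool) :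
    majWeight (fun b => if b then ENNReal.ofReal r else ENNReal.ofReal (1 - r)) v
      = (if v then ENNReal.ofReal r' else ENNReal.ofReal (1 - r')) := by
  have h0' : (0:ℝ) ≤ 1 - r := by linarith
  have hmul : ∀ x y z : ℝ, 0 ≤ x → 0 ≤ y → 0 ≤ z →
      ENNReal.ofReal x * ENNReal.ofReal y * ENNReal.ofReal z = ENNReal.ofReal (x*y*z) := by
    intro x y z hx hy hz
    rw [← ENNReal.ofReal_mul hx, ← ENNReal.ofReal_mul (by positivity)]
  unfold majWeight
  rw [Fintype.sum_prod_type]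
  simp only [Fintype.sum_bool, Fintype.sum_prod_type, majB]
  cases v <;> simp only [Bool.and_true, Bool.and_false, Bool.or_false, Bool.false_or,
      Bool.true_and, Bool.false_and, Bool.true_or, Bool.or_true, if_true, if_false, reduceIte, reduceCtorEq]
  · rw [hmul _ _ _ h0 h0' h0', hmul _ _ _ h0' h0 h0', hmul _ _ _ h0' h0' h0,
        hmul _ _ _ h0' h0' h0']
    simp only [zero_add, add_zero]
    rw [← ENNReal.ofReal_add (by positivity) (by positivity),
        ← ENNReal.ofReal_add (by positivity) (by positivity),
        ← ENNReal.ofReal_add (by positivity) (by positivity)]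
    congr 1; nlinarith [sq_nonneg r]
  · rw [hmul _ _ _ h0 h0 h0, hmul _ _ _ h0 h0 h0', hmul _ _ _ h0 h0' h0,
        hmul _ _ _ h0' h0 h0]
    simp only [zero_add, add_zero]
    rw [← ENNReal.ofReal_add (by positivity) (by positivity),
        ← ENNReal.ofReal_add (by positivity) (by positivity),
        ← ENNReal.ofReal_add (by positivity) (by positivity)]
    congr 1; nlinarith [sq_nonneg r]

lemma step_pattern {Ω : Type*} [MeasurableSpace Ω] (Pr : Measure Ω)
    (Z Z' : ℤ → Ω → Bool) (w : Bool → ℝ≥0∞)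
    (hZm : ∀ k, Measurable (Z k))
    (hw : ∀ (s : Finset ℤ) (b : ℤ → Bool), Pr (⋂ k ∈ s, {ω | Z k ω = b k}) = ∏ k ∈ s, w (b k))
    (hZ' : ∀ k ω, Z' k ω = majB (Z (3*k-1) ω) (Z (3*k) ω) (Z (3*k+1) ω))
    (s : Finset ℤ) (b : ℤ → Bool) :
    Pr (⋂ k ∈ s, {ω | Z' k ω = b k}) = ∏ k ∈ s, majWeight w (b k) := by
  classical
  have hmZ : ∀ (j : ℤ) (v : Bool), MeasurableSet {ω | Z j ω = v} := fun j v =>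
    (hZm j) (measurableSet_singleton v)
  have hUm : ∀ (u : Finset ℤ) (d : ℤ → Bool), MeasurableSet (⋂ j ∈ u, {ω | Z j ω = d j}) :=
    fun u d => MeasurableSet.biInter (u : Set ℤ).to_countable (fun j _ => hmZ j (d j))
  have hZ'm : ∀ k, Measurable (Z' k) := by
    intro k
    have : Z' k = (fun p : Bool × Bool × Bool => majB p.1 p.2.1 p.2.2) ∘
        (fun ω => (Z (3*k-1) ω, Z (3*k) ω, Z (3*k+1) ω)) := funext (hZ' k)
    rw [this]
    exact (measurable_of_countable _).comp
      ((hZm _).prodMk ((hZm _).prodMk (hZm _)))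
  have hRm : ∀ (t : Finset ℤ), MeasurableSet (⋂ k ∈ t, {ω | Z' k ω = b k}) :=
    fun t => MeasurableSet.biInter (t : Set ℤ).to_countable
      (fun k _ => (hZ'm k) (measurableSet_singleton (b k)))
  have main : ∀ (s : Finset ℤ) (u : Finset ℤ) (d : ℤ → Bool),
      (∀ k ∈ s, (3*k-1) ∉ u ∧ (3*k) ∉ u ∧ (3*k+1) ∉ u) →
      Pr ((⋂ j ∈ u, {ω | Z j ω = d j}) ∩ ⋂ k ∈ s, {ω | Z' k ω = b k})
        = (∏ j ∈ u, w (d j)) * ∏ k ∈ s, majWeight w (b k) := by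
    intro s
    induction s using Finset.induction with
    | empty => intro u d _; simp [hw u d]
    | insert _ _ ha =>
      rename_i a s ih
      intro u d hcond
      obtain ⟨ha1, ha2, ha3⟩ := hcond a (Finset.mem_insert_self a s)
      have hne12 : (3*a-1 : ℤ) ≠ 3*a := by omega
      have hne13 : (3*a-1 : ℤ) ≠ 3*a+1 := by omega
      have hne23 : (3*a : ℤ) ≠ 3*a+1 := by omega
      set C : Finset (Bool × Bool × Bool) :=
        Finset.univ.filter (fun c => majB c.1 c.2.1 c.2.2 = b a) with hC
      set U : Set Ω := ⋂ j ∈ u, {ω | Z j ω = d j} with hU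
      set R : Set Ω := ⋂ k ∈ s, {ω | Z' k ω = b k} with hR
      set F : Bool × Bool × Bool → Set Ω := fun c =>
        U ∩ ({ω | Z (3*a-1) ω = c.1} ∩ ({ω | Z (3*a) ω = c.2.1} ∩ {ω | Z (3*a+1) ω = c.2.2})) ∩ R
        with hF
      have hsplit : U ∩ ⋂ k ∈ insert a s, {ω | Z' k ω = b k} = ⋃ c ∈ C, F c := by
        rw [Finset.set_biInter_insert]
        ext ω
        constructor
        · rintro ⟨hu, he, hr⟩
          have hcmem : (Z (3*a-1) ω, Z (3*a) ω, Z (3*a+1) ω) ∈ C := by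
            rw [hC, Finset.mem_filter]
            exact ⟨Finset.mem_univ _, by rw [← hZ' a ω]; exact he⟩
          exact Set.mem_biUnion hcmem ⟨⟨hu, rfl, rfl, rfl⟩, hr⟩
        · intro h
          obtain ⟨c, hc, hmem⟩ := Set.mem_iUnion₂.1 h
          have hu := hmem.1.1
          have h1 := hmem.1.2.1
          have h2 := hmem.1.2.2.1
          have h3 := hmem.1.2.2.2
          have hr := hmem.2
          refine ⟨hu, ?_, hr⟩
          have hcm := (Finset.mem_filter.1 (hC ▸ hc)).2
          show Z' a ω = b a
          rw [hZ' a ω, h1, h2, h3]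
          exact hcm
      have hdisj : (C : Set (Bool × Bool × Bool)).PairwiseDisjoint F := by
        intro c _ c' _ hne
        refine Set.disjoint_left.2 fun ω hω hω' => hne ?_
        obtain ⟨e1, e2, e3⟩ := hω.1.2
        obtain ⟨e1', e2', e3'⟩ := hω'.1.2
        exact Prod.ext (e1 ▸ e1') (Prod.ext (e2 ▸ e2') (e3 ▸ e3'))
      have hFm : ∀ c ∈ C, MeasurableSet (F c) := by
        intro c _
        exact ((hUm u d).inter ((hmZ _ _).inter ((hmZ _ _).inter (hmZ _ _)))).inter (hRm s)
      have hFval : ∀ c ∈ C, Pr (F c)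
          = (w c.1 * (w c.2.1 * (w c.2.2 * ∏ j ∈ u, w (d j)))) * ∏ k ∈ s, majWeight w (b k) := by
        intro c _
        set d' : ℤ → Bool := fun j =>
          if j = 3*a-1 then c.1 else if j = 3*a then c.2.1 else if j = 3*a+1 then c.2.2 else d j
          with hd'
        have hd'1 : d' (3*a-1) = c.1 := by simp [hd']
        have hd'2 : d' (3*a) = c.2.1 := by simp [hd', hne12.symm]
        have hd'3 : d' (3*a+1) = c.2.2 := by simp [hd', hne13.symm, hne23.symm]
        have hd'u : ∀ j ∈ u, d' j = d j := by
          intro j hj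
          have n1 : j ≠ 3*a-1 := fun h => ha1 (h ▸ hj)
          have n2 : j ≠ 3*a := fun h => ha2 (h ▸ hj)
          have n3 : j ≠ 3*a+1 := fun h => ha3 (h ▸ hj)
          simp [hd', n1, n2, n3]
        have hset : F c = (⋂ j ∈ insert (3*a-1) (insert (3*a) (insert (3*a+1) u)),
            {ω | Z j ω = d' j}) ∩ R := by
          rw [Finset.set_biInter_insert, Finset.set_biInter_insert, Finset.set_biInter_insert,
            hd'1, hd'2, hd'3]
          have : ⋂ j ∈ u, {ω | Z j ω = d' j} = U := by
            rw [hU]; exact Set.iInter₂_congr (fun j hj => by rw [hd'u j hj])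
          rw [this, hF]
          ext ω; simp only [Set.mem_inter_iff]; tauto
        have hmem1 : (3*a-1 : ℤ) ∉ insert (3*a) (insert (3*a+1) u) := by
          simp only [Finset.mem_insert]; push_neg; exact ⟨hne12, hne13, ha1⟩
        have hmem2 : (3*a : ℤ) ∉ insert (3*a+1) u := by
          simp only [Finset.mem_insert]; push_neg; exact ⟨hne23, ha2⟩
        have hcond' : ∀ k ∈ s, (3*k-1) ∉ insert (3*a-1) (insert (3*a) (insert (3*a+1) u))
            ∧ (3*k) ∉ insert (3*a-1) (insert (3*a) (insert (3*a+1) u))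
            ∧ (3*k+1) ∉ insert (3*a-1) (insert (3*a) (insert (3*a+1) u)) := by
          intro k hk
          obtain ⟨h1, h2, h3⟩ := hcond k (Finset.mem_insert_of_mem hk)
          have hka : k ≠ a := fun h => ha (h ▸ hk)
          simp only [Finset.mem_insert]
          push_neg
          refine ⟨⟨by omega, by omega, by omega, h1⟩, ⟨by omega, by omega, by omega, h2⟩,
            ⟨by omega, by omega, by omega, h3⟩⟩
        have hprod : ∏ j ∈ u, w (d' j) = ∏ j ∈ u, w (d j) :=
          Finset.prod_congr rfl (fun j hj => by rw [hd'u j hj])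
        rw [hset, ih _ d' hcond', Finset.prod_insert hmem1, Finset.prod_insert hmem2,
          Finset.prod_insert ha3, hd'1, hd'2, hd'3, hprod]
      have hsum : Pr (U ∩ ⋂ k ∈ insert a s, {ω | Z' k ω = b k}) = ∑ c ∈ C, Pr (F c) := by
        rw [hsplit, measure_biUnion_finset hdisj hFm]
      rw [hsum, Finset.sum_congr rfl hFval, Finset.prod_insert ha]
      have hCval : ∑ c ∈ C, w c.1 * w c.2.1 * w c.2.2 = majWeight w (b a) := by
        rw [majWeight, hC, Finset.sum_filter]
      calc ∑ c ∈ C, (w c.1 * (w c.2.1 * (w c.2.2 * ∏ j ∈ u, w (d j)))) * ∏ k ∈ s, majWeight w (b k)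
          = ∑ c ∈ C, (w c.1 * w c.2.1 * w c.2.2) *
              ((∏ j ∈ u, w (d j)) * ∏ k ∈ s, majWeight w (b k)) := by
            exact Finset.sum_congr rfl (fun c _ => by ring)
        _ = (∑ c ∈ C, w c.1 * w c.2.1 * w c.2.2) *
              ((∏ j ∈ u, w (d j)) * ∏ k ∈ s, majWeight w (b k)) := by
            rw [Finset.sum_mul]
        _ = (∏ j ∈ u, w (d j)) * (majWeight w (b a) * ∏ k ∈ s, majWeight w (b k)) := by
            rw [hCval]; ring
  have := main s ∅ (fun _ => false) (by simp)
  simpa using this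

lemma dyn_summable (e : ℕ → ℝ) (h0 : 0 ≤ e 0) (hlt : e 0 < 1/2)
    (hrec : ∀ n, e (n+1) = 3*(e n)^2 - 2*(e n)^3) :
    Summable e := by
  have bounds : ∀ n, 0 ≤ e n ∧ e n < 1/2 := by
    intro n
    induction n with
    | zero => exact ⟨h0, hlt⟩
    | succ n ih =>
      obtain ⟨hl, hr⟩ := ih
      constructor
      · rw [hrec]; nlinarith
      · rw [hrec]
        nlinarith [mul_pos (show (0:ℝ) < 1/2 - e n by linarith)
          (show (0:ℝ) < 1 + 2*e n - 2*(e n)^2 by nlinarith)]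
  have exists_small : ∃ m, e m ≤ 1/4 := by
    by_contra h
    push_neg at h
    have grow : ∀ n, (11/8)^n * (1/2 - e 0) ≤ 1/2 - e n := by
      intro n
      induction n with
      | zero => simp
      | succ n ih =>
        have h1 := (bounds n).2
        have h2 := h n
        have key : (11/8) * (1/2 - e n) ≤ 1/2 - e (n+1) := by
          rw [hrec]; nlinarith [sq_nonneg (1/2 - e n)]
        calc (11/8)^(n+1) * (1/2 - e 0) = (11/8) * ((11/8)^n * (1/2 - e 0)) := by
              rw [pow_succ]; ring
          _ ≤ (11/8) * (1/2 - e n) := by nlinarith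
          _ ≤ 1/2 - e (n+1) := key
    obtain ⟨n, hn⟩ := pow_unbounded_of_one_lt ((1/2) / (1/2 - e 0)) (by norm_num : (1:ℝ) < 11/8)
    have hpos : (0:ℝ) < 1/2 - e 0 := by linarith
    have : (1/2 : ℝ) < (11/8)^n * (1/2 - e 0) := by
      rw [div_lt_iff₀ hpos] at hn; linarith
    have := grow n
    have := (bounds n).1
    linarith
  obtain ⟨m, hm⟩ := exists_small
  have geom : ∀ j, e (m+j) ≤ (3/4)^j * e m ∧ e (m+j) ≤ 1/4 := by
    intro j
    induction j with
    | zero => simpa using hm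
    | succ j ih =>
      obtain ⟨h1, h2⟩ := ih
      have h3 := (bounds (m+j)).1
      have h4 : e (m + (j+1)) = 3*(e (m+j))^2 - 2*(e (m+j))^3 := by
        have : m + (j+1) = (m+j) + 1 := by ring
        rw [this, hrec]
      constructor
      · rw [h4]
        calc 3*(e (m+j))^2 - 2*(e (m+j))^3 ≤ (3/4) * e (m+j) := by
              nlinarith [mul_nonneg h3 (show (0:ℝ) ≤ 3/4 - 3*e (m+j) by linarith),
                mul_nonneg (mul_nonneg h3 h3) h3]
          _ ≤ (3/4) * ((3/4)^j * e m) := by nlinarith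
          _ = (3/4)^(j+1) * e m := by ring
      · rw [h4]
        nlinarith [mul_nonneg h3 (show (0:ℝ) ≤ 3/4 - 3*e (m+j) by linarith),
          mul_nonneg (mul_nonneg h3 h3) h3]
  rw [← summable_nat_add_iff m]
  refine Summable.of_nonneg_of_le (fun j => (bounds (j+m)).1) (fun j => ?_)
    ((summable_geometric_of_lt_one (show (0:ℝ) ≤ 3/4 by norm_num) (show (3:ℝ)/4 < 1 by norm_num)).mul_right (e m))
  have := (geom j).1
  rwa [add_comm m j] at this

lemma bc_eventually {Ω : Type*} [MeasurableSpace Ω] (Pr : Measure Ω) [IsProbabilityMeasure Pr]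
    (B : ℕ → Set Ω) (hB : ∀ n, MeasurableSet (B n)) (hsum : ∑' n, Pr (B n) ≠ ⊤) :
    Pr {ω | ∃ m, ∀ n ≥ m, ω ∉ B n} = 1 := by
  set E := {ω | ∃ m, ∀ n ≥ m, ω ∉ B n} with hE
  have hEset : E = ⋃ m, ⋂ n, ⋂ (_ : n ≥ m), (B n)ᶜ := by
    ext ω; simp [hE]
  have hEm : MeasurableSet E := by
    rw [hEset]
    exact MeasurableSet.iUnion fun m => MeasurableSet.iInter fun n =>
      MeasurableSet.iInter fun _ => (hB n).compl
  have hsub : ∀ m, Eᶜ ⊆ ⋃ n, B (n + m) := by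
    intro m ω hω
    simp only [hE, Set.mem_compl_iff, Set.mem_setOf_eq, not_exists, not_forall] at hω
    obtain ⟨n, hnm, hn⟩ := hω m
    rw [not_not] at hn
    exact Set.mem_iUnion.2 ⟨n - m, by rwa [Nat.sub_add_cancel hnm]⟩
  have hle : ∀ m, Pr Eᶜ ≤ ∑' n, Pr (B (n + m)) := fun m =>
    (measure_mono (hsub m)).trans (measure_iUnion_le _)
  have h0 : Pr Eᶜ ≤ 0 :=
    ge_of_tendsto (ENNReal.tendsto_sum_nat_add (fun n => Pr (B n)) hsum)
      (Filter.Eventually.of_forall hle)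
  exact (prob_compl_eq_zero_iff hEm).1 (le_antisymm h0 zero_le)

def cRad : ℕ → ℤ
  | 0 => 0
  | n + 1 => 3 ^ n + cRad n

lemma two_cRad : ∀ n, 2 * cRad n = 3 ^ n - 1 := by
  intro n
  induction n with
  | zero => rfl
  | succ n ih => rw [cRad]; rw [pow_succ]; omega

lemma cRad_nonneg (n : ℕ) : 0 ≤ cRad n := by
  have := two_cRad n
  have : (1:ℤ) ≤ 3 ^ n := one_le_pow₀ (by norm_num)
  omega

lemma cRad_mono : Monotone cRad := by
  apply monotone_nat_of_le_succ
  intro n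
  have : (0:ℤ) ≤ 3 ^ n := pow_nonneg (by norm_num) n
  rw [cRad]; omega


/-- **Majority renormalization of an i.i.d. Bernoulli sequence.**
Let `X = (X_k)_{k ∈ ℤ}` be i.i.d. Bernoulli(`p`) and let `Y n` denote the `n`-th iterate of
the block-majority renormalization, `Y (n+1) k = maj(Y n (3k-1), Y n (3k), Y n (3k+1))`.
If `p > 1/2` the trace `(Y n 0)_n` a.s. eventually stabilizes at `1`; if `p < 1/2` it a.s.
eventually stabilizes at `0` (and stabilizes at `1` with probability `0`); and if `p = 1/2`
it a.s. stabilizes at neither value. -/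
theorem majority_renormalization_trace
    {Ω : Type*} [MeasurableSpace Ω] (Pr : Measure Ω) [IsProbabilityMeasure Pr]
    (p : ℝ≥0∞) (hp : p ≤ 1)
    (X : ℤ → Ω → Bool) (hmeas : ∀ k, Measurable (X k))
    (hindep : iIndepFun X Pr)
    (hdist : ∀ k, Measure.map (X k) Pr = (PMF.bernoulli p.toNNReal
      (by simpa using ENNReal.toNNReal_mono ENNReal.one_ne_top hp)).toMeasure)
    (Y : ℕ → ℤ → Ω → Bool)
    (hY0 : ∀ k ω, Y 0 k ω = X k ω)
    (hYs : ∀ n k ω, Y (n + 1) k ω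
      = majB (Y n (3 * k - 1) ω) (Y n (3 * k) ω) (Y n (3 * k + 1) ω)) :
    (1 / 2 < p → Pr {ω | ∃ m, ∀ n ≥ m, Y n 0 ω = true} = 1) ∧
    (p < 1 / 2 → Pr {ω | ∃ m, ∀ n ≥ m, Y n 0 ω = true} = 0 ∧
      Pr {ω | ∃ m, ∀ n ≥ m, Y n 0 ω = false} = 1) ∧
    (p = 1 / 2 → Pr {ω | (∃ m, ∀ n ≥ m, Y n 0 ω = true) ∨
      (∃ m, ∀ n ≥ m, Y n 0 ω = false)} = 0) := by
  classical
  have hp_ne_top : p ≠ ⊤ := fun h => by simp [h] at hp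
  -- the real recursion for the level marginals
  set r : ℕ → ℝ := fun n => Nat.rec p.toReal (fun _ x => 3*x^2 - 2*x^3) n with hrdef
  have hr0 : r 0 = p.toReal := rfl
  have hrs : ∀ n, r (n+1) = 3*(r n)^2 - 2*(r n)^3 := fun n => rfl
  have hr01 : ∀ n, 0 ≤ r n ∧ r n ≤ 1 := by
    intro n
    induction n with
    | zero =>
      refine ⟨ENNReal.toReal_nonneg, ?_⟩
      calc p.toReal ≤ (1:ℝ≥0∞).toReal := ENNReal.toReal_mono (by simp) hp
        _ = 1 := by simp
    | succ n ih =>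
      obtain ⟨h1, h2⟩ := ih
      rw [hrs]
      constructor
      · nlinarith
      · nlinarith [mul_nonneg (mul_nonneg (show (0:ℝ) ≤ 1 - r n by linarith)
          (show (0:ℝ) ≤ 1 - r n by linarith)) (show (0:ℝ) ≤ 1 + 2*r n by linarith)]
  set θ : ℕ → Bool → ℝ≥0∞ :=
    fun n v => if v then ENNReal.ofReal (r n) else ENNReal.ofReal (1 - r n) with hθ
  -- measurability of the renormalized field
  have hYmeas : ∀ n k, Measurable (Y n k) := by
    intro n
    induction n with
    | zero => intro k; have : Y 0 k = X k := funext (hY0 k); rw [this]; exact hmeas k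
    | succ n ih =>
      intro k
      have : Y (n+1) k = (fun q : Bool × Bool × Bool => majB q.1 q.2.1 q.2.2) ∘
          (fun ω => (Y n (3*k-1) ω, Y n (3*k) ω, Y n (3*k+1) ω)) := funext (hYs n k)
      rw [this]
      exact (measurable_of_countable _).comp ((ih _).prodMk ((ih _).prodMk (ih _)))
  -- the joint pattern probabilities
  have key : ∀ n (s : Finset ℤ) (b : ℤ → Bool),
      Pr (⋂ k ∈ s, {ω | Y n k ω = b k}) = ∏ k ∈ s, θ n (b k) := by
    intro n
    induction n with
    | zero =>
      intro s b
      have hset : ∀ k, {ω | Y 0 k ω = b k} = X k ⁻¹' {b k} := by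
        intro k; ext ω; simp [hY0]
      have : Pr (⋂ k ∈ s, X k ⁻¹' {b k}) = ∏ k ∈ s, Pr (X k ⁻¹' {b k}) :=
        (iIndepFun_iff_measure_inter_preimage_eq_mul.1 hindep) s
          (sets := fun k => {b k}) (fun i _ => measurableSet_singleton _)
      have hone : ∀ (k : ℤ) (v : Bool), Pr (X k ⁻¹' {v}) = θ 0 v := by
        intro k v
        rw [← Measure.map_apply (hmeas k) (measurableSet_singleton v), hdist k,
          PMF.toMeasure_apply_singleton _ _ (measurableSet_singleton v)]
        cases v
        · show (((1 - p.toNNReal : NNReal)) : ℝ≥0∞) = θ 0 false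
          rw [hθ]
          simp only [if_false, Bool.false_eq_true]
          rw [hr0, ENNReal.ofReal_sub _ ENNReal.toReal_nonneg, ENNReal.ofReal_one,
            ENNReal.ofReal_toReal hp_ne_top, ENNReal.coe_sub, ENNReal.coe_one,
            ENNReal.coe_toNNReal hp_ne_top]
        · show ((p.toNNReal : NNReal) : ℝ≥0∞) = θ 0 true
          rw [hθ]
          simp only [if_true]
          rw [hr0, ENNReal.ofReal_toReal hp_ne_top, ENNReal.coe_toNNReal hp_ne_top]
      calc Pr (⋂ k ∈ s, {ω | Y 0 k ω = b k}) = Pr (⋂ k ∈ s, X k ⁻¹' {b k}) := by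
            congr 1; exact Set.iInter₂_congr (fun k _ => hset k)
        _ = ∏ k ∈ s, Pr (X k ⁻¹' {b k}) := this
        _ = ∏ k ∈ s, θ 0 (b k) := Finset.prod_congr rfl (fun k _ => hone k (b k))
    | succ n ih =>
      intro s b
      have hsp := step_pattern Pr (Y n) (Y (n+1)) (θ n) (hYmeas n) ih (hYs n) s b
      rw [hsp]
      refine Finset.prod_congr rfl (fun k _ => ?_)
      have := majWeight_ofReal (r n) (r (n+1)) (hr01 n).1 (hr01 n).2 (hrs n) (b k)
      rw [hθ]
      exact this
  -- single-site and two-site marginals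
  have single : ∀ n (v : Bool), Pr {ω | Y n 0 ω = v} = θ n v := by
    intro n v
    have := key n {0} (fun _ => v)
    simpa using this
  have pair : ∀ n (v1 v2 : Bool),
      Pr ({ω | Y n (-1) ω = v1} ∩ {ω | Y n 1 ω = v2}) = θ n v1 * θ n v2 := by
    intro n v1 v2
    have := key n {-1, 1} (fun k => if k = -1 then v1 else v2)
    rw [Finset.set_biInter_insert, Finset.set_biInter_singleton] at this
    rw [Finset.prod_insert (by decide), Finset.prod_singleton] at this
    norm_num at this
    convert this using 2
  -- measurability of trace events
  have htrace_meas : ∀ v : Bool, MeasurableSet {ω | ∃ m, ∀ n ≥ m, Y n 0 ω = v} := by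
    intro v
    have : {ω | ∃ m, ∀ n ≥ m, Y n 0 ω = v}
        = ⋃ m, ⋂ n, ⋂ (_ : n ≥ m), {ω | Y n 0 ω = v} := by ext ω; simp
    rw [this]
    exact MeasurableSet.iUnion fun m => MeasurableSet.iInter fun n =>
      MeasurableSet.iInter fun _ => (hYmeas n 0) (measurableSet_singleton v)
  refine ⟨?_, ?_, ?_⟩
  · -- supercritical
    intro hp2
    set e : ℕ → ℝ := fun n => 1 - r n with he
    have he_rec : ∀ n, e (n+1) = 3*(e n)^2 - 2*(e n)^3 := by
      intro n
      show 1 - r (n+1) = 3*(1 - r n)^2 - 2*(1 - r n)^3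
      rw [hrs]; ring
    have he0 : 0 ≤ e 0 := by
      have := (hr01 0).2
      show (0:ℝ) ≤ 1 - r 0
      linarith
    have helt : e 0 < 1/2 := by
      have h1 : (1/2 : ℝ) < p.toReal := by
        have h12 : ((1:ℝ≥0∞)/2).toReal = 1/2 := by simp
        calc (1/2:ℝ) = ((1:ℝ≥0∞)/2).toReal := h12.symm
          _ < p.toReal := (ENNReal.toReal_lt_toReal (by simp) hp_ne_top).2 hp2
      show 1 - r 0 < 1/2
      rw [hr0]; linarith
    have hsummable := dyn_summable e he0 helt he_rec
    set B : ℕ → Set Ω := fun n => {ω | Y n 0 ω = false} with hB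
    have hBmeas : ∀ n, MeasurableSet (B n) :=
      fun n => (hYmeas n 0) (measurableSet_singleton false)
    have hBval : ∀ n, Pr (B n) = ENNReal.ofReal (e n) := by
      intro n
      show Pr {ω | Y n 0 ω = false} = _
      rw [single n false, hθ]
      simp [he]
    have hsum : ∑' n, Pr (B n) ≠ ⊤ := by
      simp_rw [hBval]
      rw [← ENNReal.ofReal_tsum_of_nonneg (fun n => by
        have := (hr01 n).2
        show (0:ℝ) ≤ 1 - r n
        linarith) hsummable]
      exact ENNReal.ofReal_ne_top
    have hbc := bc_eventually Pr B hBmeas hsum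
    have hseteq : {ω | ∃ m, ∀ n ≥ m, Y n 0 ω = true} = {ω | ∃ m, ∀ n ≥ m, ω ∉ B n} := by
      ext ω
      simp [hB]
    rw [hseteq]
    exact hbc
  · -- subcritical
    intro hp2
    have helt : r 0 < 1/2 := by
      rw [hr0]
      have h12 : ((1:ℝ≥0∞)/2).toReal = 1/2 := by simp
      calc p.toReal < ((1:ℝ≥0∞)/2).toReal := (ENNReal.toReal_lt_toReal hp_ne_top (by simp)).2 hp2
        _ = 1/2 := h12
    have hsummable := dyn_summable r (hr01 0).1 helt hrs
    set B : ℕ → Set Ω := fun n => {ω | Y n 0 ω = true} with hB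
    have hBmeas : ∀ n, MeasurableSet (B n) :=
      fun n => (hYmeas n 0) (measurableSet_singleton true)
    have hBval : ∀ n, Pr (B n) = ENNReal.ofReal (r n) := by
      intro n
      show Pr {ω | Y n 0 ω = true} = _
      rw [single n true, hθ]
      simp
    have hsum : ∑' n, Pr (B n) ≠ ⊤ := by
      simp_rw [hBval]
      rw [← ENNReal.ofReal_tsum_of_nonneg (fun n => (hr01 n).1) hsummable]
      exact ENNReal.ofReal_ne_top
    have hbc := bc_eventually Pr B hBmeas hsum
    have hseteq : {ω | ∃ m, ∀ n ≥ m, Y n 0 ω = false} = {ω | ∃ m, ∀ n ≥ m, ω ∉ B n} := by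
      ext ω
      simp [hB]
    have hone : Pr {ω | ∃ m, ∀ n ≥ m, Y n 0 ω = false} = 1 := by rw [hseteq]; exact hbc
    refine ⟨?_, hone⟩
    have hsub : {ω | ∃ m, ∀ n ≥ m, Y n 0 ω = true}
        ⊆ {ω | ∃ m, ∀ n ≥ m, Y n 0 ω = false}ᶜ := by
      rintro ω ⟨m1, h1⟩ ⟨m2, h2⟩
      have := h1 (max m1 m2) (le_max_left _ _)
      have := h2 (max m1 m2) (le_max_right _ _)
      simp_all
    refine le_antisymm ?_ zero_le
    calc Pr {ω | ∃ m, ∀ n ≥ m, Y n 0 ω = true}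
        ≤ Pr ({ω | ∃ m, ∀ n ≥ m, Y n 0 ω = false}ᶜ) := measure_mono hsub
      _ = 0 := by
          rw [measure_compl (htrace_meas false) (measure_ne_top _ _), hone]
          simp
  · -- critical
    intro hp2
    have hrhalf : ∀ n, r n = 1/2 := by
      intro n
      induction n with
      | zero => rw [hr0, hp2]; simp
      | succ n ih => rw [hrs, ih]; norm_num
    have hloc : ∀ n (k : ℤ) (ω ω' : Ω),
        (∀ i : ℤ, 3^n * k - cRad n ≤ i → i ≤ 3^n * k + cRad n → X i ω = X i ω') →
        Y n k ω = Y n k ω' := by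
      intro n
      induction n with
      | zero =>
        intro k ω ω' h
        rw [hY0, hY0]
        exact h k (by simp [cRad]) (by simp [cRad])
      | succ n ih =>
        intro k ω ω' h
        have hps : (3:ℤ)^(n+1) = 3^n * 3 := pow_succ 3 n
        have hcs : cRad (n+1) = 3^n + cRad n := rfl
        have hc0 := cRad_nonneg n
        have hp0 : (0:ℤ) ≤ 3^n := pow_nonneg (by norm_num) n
        rw [hYs, hYs]
        have e1 : (3:ℤ)^n * (3*k-1) = 3^(n+1)*k - 3^n := by rw [hps]; ring
        have e2 : (3:ℤ)^n * (3*k) = 3^(n+1)*k := by rw [hps]; ring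
        have e3 : (3:ℤ)^n * (3*k+1) = 3^(n+1)*k + 3^n := by rw [hps]; ring
        have h1 : Y n (3*k-1) ω = Y n (3*k-1) ω' := by
          apply ih
          intro i hi1 hi2
          rw [e1] at hi1 hi2
          refine h i (by rw [hcs]; linarith) (by rw [hcs]; linarith)
        have h2 : Y n (3*k) ω = Y n (3*k) ω' := by
          apply ih
          intro i hi1 hi2
          rw [e2] at hi1 hi2
          refine h i (by rw [hcs]; linarith) (by rw [hcs]; linarith)
        have h3 : Y n (3*k+1) ω = Y n (3*k+1) ω' := by
          apply ih
          intro i hi1 hi2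
          rw [e3] at hi1 hi2
          refine h i (by rw [hcs]; linarith) (by rw [hcs]; linarith)
        rw [h1, h2, h3]
    have hfactor : ∀ (S : Finset ℤ) (f : Ω → Bool),
        (∀ ω ω', (∀ i ∈ S, X i ω = X i ω') → f ω = f ω') →
        ∃ g : (↥S → Bool) → Bool, ∀ ω, f ω = g (fun i => X (i:ℤ) ω) := by
      intro S f hf
      refine ⟨fun x => if h : ∃ ω, (fun (i : ↥S) => X (i:ℤ) ω) = x then f h.choose else false,
        fun ω => ?_⟩
      have hex : ∃ ω', (fun (i : ↥S) => X (i:ℤ) ω') = (fun (i : ↥S) => X (i:ℤ) ω) := ⟨ω, rfl⟩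
      show f ω = if h : ∃ ω', (fun (i : ↥S) => X (i:ℤ) ω') = (fun (i : ↥S) => X (i:ℤ) ω)
        then f h.choose else false
      rw [dif_pos hex]
      exact hf ω hex.choose fun i hi => (congrFun hex.choose_spec ⟨i, hi⟩).symm
    set ρ : ℝ≥0∞ := ENNReal.ofReal (3/4) with hρ
    have hhalfθ : ∀ n v, θ n v = ENNReal.ofReal (1/2) := by
      intro n v
      rw [hθ]
      cases v <;> simp [hrhalf n] <;> norm_num <;> rw [ENNReal.ofReal_div_of_pos (by norm_num)] <;> simp
    have crit : ∀ (v : Bool) (m : ℕ), Pr {ω | ∀ n ≥ m, Y n 0 ω = v} = 0 := by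
      intro v m
      set A : ℕ → Set Ω := fun j => ⋂ n ∈ Finset.Icc m (m+j), {ω | Y n 0 ω = v} with hA
      have hbound : ∀ j, Pr (A j) ≤ ρ ^ j := by
        intro j
        induction j with
        | zero => simpa using prob_le_one
        | succ j ihj =>
          set N := m + j with hN
          set S : Finset ℤ := Finset.Icc (-(cRad N)) (cRad N) with hS
          set T : Finset ℤ := Finset.Icc (-(3^N) - cRad N) (-(3^N) + cRad N)
            ∪ Finset.Icc (3^N - cRad N) (3^N + cRad N) with hT
          have h2c := two_cRad N
          have hpow1 : (1:ℤ) ≤ 3^N := one_le_pow₀ (by norm_num)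
          have hST : Disjoint S T := by
            rw [Finset.disjoint_left]
            intro i hiS hiT
            rw [hS, Finset.mem_Icc] at hiS
            rw [hT, Finset.mem_union, Finset.mem_Icc, Finset.mem_Icc] at hiT
            omega
          have hYloc : ∀ n, n ≤ N → ∀ ω ω',
              (∀ i ∈ S, X i ω = X i ω') → Y n 0 ω = Y n 0 ω' := by
            intro n hn ω ω' hagree
            apply hloc n 0
            intro i hi1 hi2
            have hz : (3:ℤ)^n * 0 = 0 := mul_zero _
            rw [hz, zero_sub] at hi1
            rw [hz, zero_add] at hi2
            apply hagree
            rw [hS, Finset.mem_Icc]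
            have := cRad_mono hn
            omega
          have hfA : ∀ ω ω', (∀ i ∈ S, X i ω = X i ω') →
              (decide (∀ n ∈ Finset.Icc m (m+j), Y n 0 ω = v) : Bool)
                = decide (∀ n ∈ Finset.Icc m (m+j), Y n 0 ω' = v) := by
            intro ω ω' hag
            have hYeq : ∀ n ∈ Finset.Icc m (m+j), Y n 0 ω = Y n 0 ω' := fun n hn =>
              hYloc n (by rw [Finset.mem_Icc] at hn; omega) ω ω' hag
            refine decide_eq_decide.2 ⟨fun h n hn => ?_, fun h n hn => ?_⟩
            · rw [← hYeq n hn]; exact h n hn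
            · rw [hYeq n hn]; exact h n hn
          obtain ⟨gA, hgA⟩ := hfactor S _ hfA
          have hAj_pre : A j = (fun ω (i : ↥S) => X (i:ℤ) ω) ⁻¹' (gA ⁻¹' {true}) := by
            ext ω
            simp only [Set.mem_preimage, Set.mem_singleton_iff, ← hgA ω, decide_eq_true_eq,
              hA, Set.mem_iInter, Set.mem_setOf_eq]
          set fR : Ω → Bool := fun ω =>
            if v then Y N (-1) ω || Y N 1 ω else !(Y N (-1) ω && Y N 1 ω) with hfRdef
          have hylocm1 : ∀ ω ω', (∀ i ∈ T, X i ω = X i ω') → Y N (-1) ω = Y N (-1) ω' := by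
            intro ω ω' hag
            apply hloc N (-1)
            intro i hi1 hi2
            have hz : (3:ℤ)^N * (-1) = -(3^N) := by ring
            rw [hz] at hi1 hi2
            apply hag
            rw [hT, Finset.mem_union]
            left
            rw [Finset.mem_Icc]
            omega
          have hyloc1 : ∀ ω ω', (∀ i ∈ T, X i ω = X i ω') → Y N 1 ω = Y N 1 ω' := by
            intro ω ω' hag
            apply hloc N 1
            intro i hi1 hi2
            have hz : (3:ℤ)^N * 1 = 3^N := by ring
            rw [hz] at hi1 hi2
            apply hag
            rw [hT, Finset.mem_union]
            right
            rw [Finset.mem_Icc]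
            omega
          have hfR_loc : ∀ ω ω', (∀ i ∈ T, X i ω = X i ω') → fR ω = fR ω' := by
            intro ω ω' hag
            rw [hfRdef]
            simp only [hylocm1 ω ω' hag, hyloc1 ω ω' hag]
          obtain ⟨gR, hgR⟩ := hfactor T fR hfR_loc
          have hR_pre : {ω | fR ω = true} = (fun ω (i : ↥T) => X (i:ℤ) ω) ⁻¹' (gR ⁻¹' {true}) := by
            ext ω
            simp only [Set.mem_preimage, Set.mem_singleton_iff, ← hgR ω, Set.mem_setOf_eq]
          have hmaj : ∀ ω, Y (N+1) 0 ω = majB (Y N (-1) ω) (Y N 0 ω) (Y N 1 ω) := by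
            intro ω
            have := hYs N 0 ω
            norm_num at this
            exact this
          have hstep : A (j+1) = A j ∩ {ω | fR ω = true} := by
            ext ω
            simp only [hA, Set.mem_iInter, Set.mem_inter_iff, Set.mem_setOf_eq, Finset.mem_Icc]
            constructor
            · intro hω
              have hYN : Y N 0 ω = v := hω N ⟨by omega, by omega⟩
              have hN1 : Y (N+1) 0 ω = v := hω (N+1) ⟨by omega, by omega⟩
              refine ⟨fun n hn => hω n ⟨hn.1, by omega⟩, ?_⟩
              rw [hmaj ω, hYN] at hN1
              rw [hfRdef]
              cases v
              · rw [majB_mid_false] at hN1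
                simp only [Bool.false_eq_true, if_false, Bool.not_eq_true']
                exact hN1
              · rw [majB_mid_true] at hN1
                simpa using hN1
            · rintro ⟨hAj, hfR⟩ n hn
              by_cases hle : n ≤ m + j
              · exact hAj n ⟨hn.1, hle⟩
              · have hn1 : n = N + 1 := by omega
                have hYN : Y N 0 ω = v := hAj N ⟨by omega, by omega⟩
                rw [hn1, hmaj ω, hYN]
                rw [hfRdef] at hfR
                cases v
                · simp only [Bool.false_eq_true, if_false, Bool.not_eq_true'] at hfR
                  rw [majB_mid_false]
                  exact hfR
                · rw [majB_mid_true]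
                  simpa using hfR
          have hPr_eq : Pr (A (j+1)) = Pr (A j) * Pr {ω | fR ω = true} := by
            rw [hstep, hAj_pre, hR_pre]
            exact (hindep.indepFun_finset S T hST hmeas).measure_inter_preimage_eq_mul _ _
              ((Set.toFinite _).measurableSet) ((Set.toFinite _).measurableSet)
          have hfRval : Pr {ω | fR ω = true} ≤ ρ := by
            cases v
            · have hseteq : {ω | fR ω = true}
                  = {ω | Y N (-1) ω = false} ∪ ({ω | Y N (-1) ω = true} ∩ {ω | Y N 1 ω = false}) := by
                ext ω
                rw [hfRdef]
                cases h1 : Y N (-1) ω <;> simp [h1]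
              have hd : Disjoint {ω | Y N (-1) ω = false}
                  ({ω | Y N (-1) ω = true} ∩ {ω | Y N 1 ω = false}) := by
                rw [Set.disjoint_left]
                rintro ω h1 ⟨h2, _⟩
                simp only [Set.mem_setOf_eq] at h1 h2
                rw [h1] at h2
                exact Bool.noConfusion h2
              have hm2 : MeasurableSet ({ω | Y N (-1) ω = true} ∩ {ω | Y N 1 ω = false}) :=
                ((hYmeas N (-1)) (measurableSet_singleton true)).inter
                  ((hYmeas N 1) (measurableSet_singleton false))
              rw [hseteq, measure_union hd hm2]
              have hs1 : Pr {ω | Y N (-1) ω = false} = ENNReal.ofReal (1/2) := by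
                have := key N {-1} (fun _ => false)
                simp only [Finset.set_biInter_singleton, Finset.prod_singleton] at this
                rw [this, hhalfθ]
              rw [hs1, pair N true false, hhalfθ, hhalfθ, ← ENNReal.ofReal_mul (by norm_num),
                ← ENNReal.ofReal_add (by norm_num) (by norm_num), hρ]
              exact ENNReal.ofReal_le_ofReal (by norm_num)
            · have hseteq : {ω | fR ω = true}
                  = {ω | Y N (-1) ω = true} ∪ ({ω | Y N (-1) ω = false} ∩ {ω | Y N 1 ω = true}) := by
                ext ω
                rw [hfRdef]
                cases h1 : Y N (-1) ω <;> simp [h1]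
              have hd : Disjoint {ω | Y N (-1) ω = true}
                  ({ω | Y N (-1) ω = false} ∩ {ω | Y N 1 ω = true}) := by
                rw [Set.disjoint_left]
                rintro ω h1 ⟨h2, _⟩
                simp only [Set.mem_setOf_eq] at h1 h2
                rw [h1] at h2
                exact Bool.noConfusion h2
              have hm2 : MeasurableSet ({ω | Y N (-1) ω = false} ∩ {ω | Y N 1 ω = true}) :=
                ((hYmeas N (-1)) (measurableSet_singleton false)).inter
                  ((hYmeas N 1) (measurableSet_singleton true))
              rw [hseteq, measure_union hd hm2]
              have hs1 : Pr {ω | Y N (-1) ω = true} = ENNReal.ofReal (1/2) := by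
                have := key N {-1} (fun _ => true)
                simp only [Finset.set_biInter_singleton, Finset.prod_singleton] at this
                rw [this, hhalfθ]
              rw [hs1, pair N false true, hhalfθ, hhalfθ, ← ENNReal.ofReal_mul (by norm_num),
                ← ENNReal.ofReal_add (by norm_num) (by norm_num), hρ]
              exact ENNReal.ofReal_le_ofReal (by norm_num)
          calc Pr (A (j+1)) = Pr (A j) * Pr {ω | fR ω = true} := hPr_eq
            _ ≤ ρ ^ j * ρ := mul_le_mul' ihj hfRval
            _ = ρ ^ (j+1) := (pow_succ ρ j).symm
      have hEsub : ∀ j, {ω | ∀ n ≥ m, Y n 0 ω = v} ⊆ A j := by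
        intro j ω hω
        simp only [hA, Set.mem_iInter, Finset.mem_Icc]
        intro n hn
        exact hω n hn.1
      have hle : ∀ j, Pr {ω | ∀ n ≥ m, Y n 0 ω = v} ≤ ρ ^ j := fun j =>
        (measure_mono (hEsub j)).trans (hbound j)
      refine le_antisymm ?_ zero_le
      exact ge_of_tendsto
        (ENNReal.tendsto_pow_atTop_nhds_zero_of_lt_one (ENNReal.ofReal_lt_one.2 (by norm_num)))
        (Filter.Eventually.of_forall hle)
    have hcup : ∀ v : Bool, Pr {ω | ∃ m, ∀ n ≥ m, Y n 0 ω = v} = 0 := by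
      intro v
      have : {ω | ∃ m, ∀ n ≥ m, Y n 0 ω = v} = ⋃ m, {ω | ∀ n ≥ m, Y n 0 ω = v} := by
        ext ω
        simp
      rw [this]
      exact measure_iUnion_null (crit v)
    have : {ω | (∃ m, ∀ n ≥ m, Y n 0 ω = true) ∨ (∃ m, ∀ n ≥ m, Y n 0 ω = false)}
        = {ω | ∃ m, ∀ n ≥ m, Y n 0 ω = true} ∪ {ω | ∃ m, ∀ n ≥ m, Y n 0 ω = false} := rfl
    rw [this]
    exact measure_union_null (hcup true) (hcup false)
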